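/- Let d be a positive integer with d ≡ 3 (mod 4) or 8 ∣ d, and let ω(d) denote the number of distinct prime divisors of d. Then the number of residue classes x ∈ ℤ/2dℤ satisfying x² ≡ 1 + d (mod 4d) (a condition that is well defined on classes modulo 2d) is exactly 2^{ω(d)}. -/

import Mathlib

open Int

/-- If `r ≡ s` mod `2^k` (`k ≥ 1`), then `r² ≡ s²` mod `2^(k+1)`. -/
lemma sq_modEq_lift {k : ℕ} (hk : 1 ≤ k) {r s : ℤ} (h : r ≡ s [ZMOD (2:ℤ)^k]) :
    r ^ 2 ≡ s ^ 2 [ZMOD (2:ℤ)^(k+1)] := by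
  have h1 : (2:ℤ)^k ∣ s - r := Int.ModEq.dvd h
  have h2 : (2:ℤ) ∣ s + r := by
    have : (2:ℤ) ∣ s - r := dvd_trans (dvd_pow_self 2 (by omega)) h1
    omega
  have : (2:ℤ)^(k+1) ∣ s^2 - r^2 := by
    have := mul_dvd_mul h1 h2
    have e : (s - r) * (s + r) = s^2 - r^2 := by ring
    rw [e] at this
    rwa [pow_succ]
  exact (Int.modEq_iff_dvd).2 this

/-- Square roots of one modulo an odd prime power: exactly `1` and `-1`. -/
lemma sq_eq_one_iff_prime_pow {p n : ℕ} (hp : p.Prime) (hodd : p ≠ 2) (hn : 0 < n)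
    (v : ZMod (p ^ n)) : v ^ 2 = 1 ↔ v = 1 ∨ v = -1 := by
  haveI : NeZero (p ^ n) := ⟨pow_ne_zero _ hp.pos.ne'⟩
  constructor
  · intro hv
    have hlift : ((v.val : ℤ))^2 ≡ 1 [ZMOD ((p^n : ℕ) : ℤ)] := by
      rw [← ZMod.intCast_eq_intCast_iff]
      push_cast
      rw [ZMod.natCast_val, ZMod.cast_id]
      exact hv
    have hdvd : ((p:ℤ))^n ∣ ((v.val:ℤ) - 1) * ((v.val:ℤ) + 1) := by
      have := Int.ModEq.dvd hlift
      have e : (1:ℤ) - (v.val:ℤ)^2 = -( ((v.val:ℤ) - 1) * ((v.val:ℤ) + 1)) := by ring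
      rw [e, dvd_neg] at this
      exact_mod_cast this
    have hpZ : Prime ((p:ℤ)) := Int.prime_iff_natAbs_prime.2 (by simpa using hp)
    have hnot : ¬ ((p:ℤ) ∣ (v.val:ℤ) - 1 ∧ (p:ℤ) ∣ (v.val:ℤ) + 1) := by
      rintro ⟨h1, h2⟩
      have hd2 : (p:ℤ) ∣ 2 := by
        have := dvd_sub h2 h1; simpa using this
      have hle : (p:ℤ) ≤ 2 := Int.le_of_dvd (by norm_num) hd2
      have := hp.two_le
      omega
    by_cases h1 : (p:ℤ) ∣ (v.val:ℤ) - 1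
    · have h2 : ¬ (p:ℤ) ∣ (v.val:ℤ) + 1 := fun hh => hnot ⟨h1, hh⟩
      have hdl : ((p:ℤ))^n ∣ (v.val:ℤ) - 1 :=
        hpZ.pow_dvd_of_dvd_mul_right n h2 hdvd
      left
      have hz : ((((v.val:ℤ) - 1 : ℤ)) : ZMod (p^n)) = 0 := by
        rw [ZMod.intCast_zmod_eq_zero_iff_dvd]
        exact_mod_cast hdl
      push_cast at hz
      rw [ZMod.natCast_val, ZMod.cast_id, sub_eq_zero] at hz
      exact hz
    · have h2 : (p:ℤ) ∣ (v.val:ℤ) + 1 := by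
        rcases (hpZ.dvd_mul.1 (dvd_trans (dvd_pow_self _ hn.ne') hdvd)) with h | h
        · exact absurd h h1
        · exact h
      have hdl : ((p:ℤ))^n ∣ (v.val:ℤ) + 1 :=
        hpZ.pow_dvd_of_dvd_mul_left n h1 hdvd
      right
      have hz : ((((v.val:ℤ) + 1 : ℤ)) : ZMod (p^n)) = 0 := by
        rw [ZMod.intCast_zmod_eq_zero_iff_dvd]
        exact_mod_cast hdl
      push_cast at hz
      rw [ZMod.natCast_val, ZMod.cast_id] at hz
      linear_combination hz
  · rintro (rfl | rfl) <;> ring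

lemma card_sq_eq_one_odd : ∀ m : ℕ, Odd m →
    Nat.card {v : ZMod m // v ^ 2 = 1} = 2 ^ m.primeFactors.card := by
  refine Nat.recOnPosPrimePosCoprime ?_ ?_ ?_ ?_
  · -- prime power
    intro p n hp hn hodd
    have hp' : p.Prime := hp
    have hpodd : p ≠ 2 := by
      rintro rfl
      exact (Nat.not_odd_iff_even.2 (Nat.even_pow.mpr ⟨even_two, hn.ne'⟩)) hodd
    have hset : {v : ZMod (p^n) | v ^ 2 = 1} = {1, -1} := by
      ext v
      simp only [Set.mem_setOf_eq, Set.mem_insert_iff, Set.mem_singleton_iff]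
      exact sq_eq_one_iff_prime_pow hp' hpodd hn v
    have h3 : 2 < p ^ n := by
      have : 3 ≤ p := by have := hp'.two_le; omega
      calc 2 < 3 := by norm_num
        _ ≤ p := this
        _ = p ^ 1 := (pow_one p).symm
        _ ≤ p ^ n := Nat.pow_le_pow_right (by omega) hn
    haveI : Fact (2 < p ^ n) := ⟨h3⟩
    have hne : (1 : ZMod (p^n)) ≠ -1 := by
      intro hcon
      exact ZMod.neg_one_ne_one hcon.symm
    have : Nat.card {v : ZMod (p^n) // v ^ 2 = 1} = ({1, -1} : Set (ZMod (p^n))).ncard := by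
      rw [← Nat.card_coe_set_eq, ← hset]; rfl
    rw [this, Set.ncard_pair hne, Nat.primeFactors_prime_pow hn.ne' hp, Finset.card_singleton,
      pow_one]
  · rintro ⟨k, hk⟩; omega
  · intro _
    simp only [Nat.primeFactors_one, Finset.card_empty, pow_zero]
    rw [Nat.card_eq_one_iff_unique]
    constructor
    · infer_instance
    · exact ⟨⟨1, one_pow 2⟩⟩
  · intro a b ha hb hab iha ihb hodd
    rw [Nat.odd_mul] at hodd
    haveI : NeZero (a * b) := ⟨by positivity⟩
    let E := ZMod.chineseRemainder hab
    have e1 : {v : ZMod (a*b) // v ^ 2 = 1} ≃ {w : ZMod a × ZMod b // w ^ 2 = 1} :=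
      E.toEquiv.subtypeEquiv (fun v => by
        constructor
        · intro hv
          show (E v) ^ 2 = 1
          rw [← map_pow, hv, map_one]
        · intro hv
          have : E (v ^ 2) = E 1 := by rw [map_pow, map_one]; exact hv
          exact E.injective this)
    have e2 : {w : ZMod a × ZMod b // w ^ 2 = 1} ≃
        {x : ZMod a // x ^ 2 = 1} × {y : ZMod b // y ^ 2 = 1} := by
      refine (Equiv.subtypeEquivRight ?_).trans (Equiv.subtypeProdEquivProd)
      intro w
      rw [Prod.ext_iff]
      exact Iff.rfl
    rw [Nat.card_congr (e1.trans e2), Nat.card_prod, iha hodd.1, ihb hodd.2,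
      hab.primeFactors_mul, Finset.card_union_of_disjoint hab.disjoint_primeFactors, pow_add]

lemma nat_mod_split {M s t : ℕ} (hM : 0 < M) (hs : s < 2*M) (ht : t < 2*M)
    (h : s % M = t % M) : s = t ∨ s = t + M ∨ t = s + M := by
  have h1 := Nat.div_add_mod s M
  have h2 := Nat.div_add_mod t M
  have hr : s % M < M := Nat.mod_lt _ hM
  have hr' : t % M < M := Nat.mod_lt _ hM
  have hq : s / M < 2 := Nat.div_lt_of_lt_mul (by omega)
  have hq' : t / M < 2 := Nat.div_lt_of_lt_mul (by omega)
  set a := s / M with ha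
  set b := t / M with hb
  interval_cases a <;> interval_cases b <;> omega

lemma odd_of_sq_modEq {j : ℕ} (hj : 1 ≤ j) {t c : ℤ} (h : t^2 ≡ c [ZMOD (2:ℤ)^j])
    (hc : c ≡ 1 [ZMOD 8]) : Odd t := by
  have h2 : (2:ℤ) ∣ c - t^2 := dvd_trans (dvd_pow_self 2 (by omega)) h.dvd
  have h8 : (8:ℤ) ∣ 1 - c := hc.dvd
  rcases Int.even_or_odd t with ⟨s, rfl⟩ | ho
  · exfalso
    have e : (s+s)^2 = 4*(s*s) := by ring
    rw [e] at h2
    generalize s*s = y at h2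
    omega
  · exact ho

lemma no_two_roots {k : ℕ} (hk : 2 ≤ k) {c t : ℤ} (hc : c ≡ 1 [ZMOD 8])
    (h1 : t^2 ≡ c [ZMOD (2:ℤ)^(k+2)]) (h2 : (t + 2^k)^2 ≡ c [ZMOD (2:ℤ)^(k+2)]) : False := by
  have hodd : Odd t := odd_of_sq_modEq (j := k+2) (by omega) h1 hc
  have hd : (2:ℤ)^(k+2) ∣ t^2 - (t + 2^k)^2 := (h2.trans h1.symm).dvd
  have e : t^2 - (t + 2^k)^2 = -(2*2^k*t + 2^k*2^k) := by ring
  rw [e, dvd_neg] at hd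
  have h2k : (2:ℤ)^(k+2) ∣ 2^k*2^k := ⟨2^(k-2), by rw [← pow_add, ← pow_add]; congr 1; omega⟩
  have hdt : (2:ℤ)^(k+2) ∣ 2*2^k*t := by
    have := dvd_sub hd h2k
    simpa using this
  have hre : (2:ℤ)^(k+2) = (2*2^k)*2 := by ring
  rw [hre] at hdt
  have h2t : (2:ℤ) ∣ t := by
    have hne : (2*(2:ℤ)^k) ≠ 0 := by positivity
    exact (mul_dvd_mul_iff_left hne).mp hdt
  rw [← Int.not_even_iff_odd] at hodd
  exact hodd (even_iff_two_dvd.mpr h2t)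

lemma card_two_pow_sol : ∀ k : ℕ, 2 ≤ k → ∀ c : ℤ, c ≡ 1 [ZMOD 8] →
    Nat.card {u : ZMod (2^k) // ((u.val : ℤ))^2 ≡ c [ZMOD (2:ℤ)^(k+1)]} = 2 := by
  intro k hk
  induction k, hk using Nat.le_induction with
  | base =>
    intro c hc
    have h8 : (8:ℤ) ∣ 1 - c := hc.dvd
    haveI : NeZero (2^2) := ⟨by norm_num⟩
    have hset : {u : ZMod (2^2) | ((u.val : ℤ))^2 ≡ c [ZMOD (2:ℤ)^(2+1)]} = {1, 3} := by
      ext u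
      simp only [Set.mem_setOf_eq, Set.mem_insert_iff, Set.mem_singleton_iff]
      constructor
      · intro hu
        have hd : (8:ℤ) ∣ c - (u.val:ℤ)^2 := by
          have := hu.dvd
          rwa [show ((2:ℤ)^(2+1)) = 8 by norm_num] at this
        have hv : u.val < 4 := u.val_lt
        have : u.val = 0 ∨ u.val = 1 ∨ u.val = 2 ∨ u.val = 3 := by omega
        rcases this with e | e | e | e <;> rw [e] at hd <;> push_cast at hd
        · omega
        · left; apply ZMod.val_injective; rw [e]; decide
        · omega
        · right; apply ZMod.val_injective; rw [e]; decide
      · rintro (rfl | rfl)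
        · have hv : ((1 : ZMod (2^2)).val : ℤ) = 1 := by decide
          rw [hv]
          have : (2:ℤ)^(2+1) ∣ c - 1^2 := by norm_num; omega
          exact (Int.modEq_iff_dvd.mpr this)
        · have hv : ((3 : ZMod (2^2)).val : ℤ) = 3 := by decide
          rw [hv]
          have : (2:ℤ)^(2+1) ∣ c - 3^2 := by norm_num; omega
          exact (Int.modEq_iff_dvd.mpr this)
    have hne : (1 : ZMod (2^2)) ≠ 3 := by decide
    have hcard : Nat.card {u : ZMod (2^2) // ((u.val : ℤ))^2 ≡ c [ZMOD (2:ℤ)^(2+1)]}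
        = ({1, 3} : Set (ZMod (2^2))).ncard := by
      rw [← Nat.card_coe_set_eq, ← hset]; rfl
    rw [hcard, Set.ncard_pair hne]
  | succ k hk ih =>
    intro c hc
    haveI : NeZero (2^k) := ⟨pow_ne_zero _ two_ne_zero⟩
    haveI : NeZero (2^(k+1)) := ⟨pow_ne_zero _ two_ne_zero⟩
    have hred : ∀ u : ZMod (2^(k+1)), ((u.val : ℤ))^2 ≡ c [ZMOD (2:ℤ)^(k+1+1)] →
        ((((u.val : ZMod (2^k))).val : ℤ))^2 ≡ c [ZMOD (2:ℤ)^(k+1)] := by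
      intro u hu
      have hv : (((u.val : ZMod (2^k))).val : ℤ) ≡ (u.val : ℤ) [ZMOD (2:ℤ)^k] := by
        rw [ZMod.val_natCast]
        show ((u.val % 2^k : ℕ) : ℤ) % _ = _
        push_cast
        exact Int.emod_emod_of_dvd _ dvd_rfl
      have h1 : (((u.val : ZMod (2^k))).val : ℤ)^2 ≡ (u.val : ℤ)^2 [ZMOD (2:ℤ)^(k+1)] :=
        sq_modEq_lift (by omega) hv
      exact h1.trans (hu.of_dvd (pow_dvd_pow 2 (by omega)))
    let f : {u : ZMod (2^(k+1)) // ((u.val : ℤ))^2 ≡ c [ZMOD (2:ℤ)^(k+1+1)]} →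
        {r : ZMod (2^k) // ((r.val : ℤ))^2 ≡ c [ZMOD (2:ℤ)^(k+1)]} :=
      fun u => ⟨(u.1.val : ZMod (2^k)), hred u.1 u.2⟩
    have hinj : Function.Injective f := by
      rintro ⟨u₁, h₁⟩ ⟨u₂, h₂⟩ hf
      simp only [f, Subtype.mk.injEq] at hf ⊢
      have hmod : u₁.val % 2^k = u₂.val % 2^k := by
        have := congrArg ZMod.val hf
        rwa [ZMod.val_natCast, ZMod.val_natCast] at this
      have hlt₁ : u₁.val < 2 * 2^k :=
        lt_of_lt_of_le u₁.val_lt (le_of_eq (by ring))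
      have hlt₂ : u₂.val < 2 * 2^k :=
        lt_of_lt_of_le u₂.val_lt (le_of_eq (by ring))
      have hk2 : (k:ℤ) ≥ 0 := Int.natCast_nonneg k
      rcases nat_mod_split (by positivity) hlt₁ hlt₂ hmod with e | e | e
      · exact ZMod.val_injective _ e
      · exfalso
        have he : (u₁.val : ℤ) = (u₂.val : ℤ) + 2^k := by exact_mod_cast congrArg (Nat.cast (R := ℤ)) e
        rw [he] at h₁
        exact no_two_roots hk hc h₂ h₁
      · exfalso
        have he : (u₂.val : ℤ) = (u₁.val : ℤ) + 2^k := by exact_mod_cast congrArg (Nat.cast (R := ℤ)) e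
        rw [he] at h₂
        exact no_two_roots hk hc h₁ h₂
    have hsurj : Function.Surjective f := by
      rintro ⟨r, hr⟩
      have htlt : r.val < 2^k := r.val_lt
      have hodd : Odd ((r.val : ℤ)) := odd_of_sq_modEq (j := k+1) (by omega) hr hc
      obtain ⟨s, hs⟩ := hr.dvd
      rcases Int.even_or_odd s with ⟨w, hw⟩ | ⟨w, hw⟩
      · -- even s : lift r.val itself
        refine ⟨⟨((r.val : ℕ) : ZMod (2^(k+1))), ?_⟩, ?_⟩
        · rw [ZMod.val_cast_of_lt (lt_trans htlt (pow_lt_pow_right₀ one_lt_two (by omega)))]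
          rw [Int.modEq_iff_dvd]
          refine ⟨w, ?_⟩
          rw [hw] at hs
          rw [hs]
          ring
        · apply Subtype.ext
          simp only [f]
          rw [ZMod.val_cast_of_lt (lt_trans htlt (pow_lt_pow_right₀ one_lt_two (by omega)))]
          exact ZMod.natCast_rightInverse r
      · -- odd s : lift r.val + 2^k
        refine ⟨⟨((r.val + 2^k : ℕ) : ZMod (2^(k+1))), ?_⟩, ?_⟩
        · have hlt : r.val + 2^k < 2^(k+1) := by
            rw [pow_succ]; omega
          rw [ZMod.val_cast_of_lt hlt]
          rw [Int.modEq_iff_dvd]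
          obtain ⟨v, hv⟩ := hodd
          have e : c - ((r.val + 2^k : ℕ) : ℤ)^2
              = (2^(k+1)*(s - (r.val:ℤ)) - 2^k*2^k : ℤ) := by
            push_cast
            linear_combination hs
          rw [e]
          have d1 : (2:ℤ)^(k+1+1) ∣ 2^(k+1)*(s - (r.val:ℤ)) := by
            have : s - (r.val:ℤ) = 2*(w - v) := by omega
            rw [this, pow_succ]
            ring_nf
            exact ⟨w - v, by ring⟩
          have d2 : (2:ℤ)^(k+1+1) ∣ 2^k*2^k := ⟨2^(k-2), by rw [← pow_add, ← pow_add]; congr 1; omega⟩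
          exact dvd_sub d1 d2
        · apply Subtype.ext
          simp only [f]
          have hlt : r.val + 2^k < 2^(k+1) := by rw [pow_succ]; omega
          rw [ZMod.val_cast_of_lt hlt, Nat.cast_add, ZMod.natCast_self, add_zero]
          exact ZMod.natCast_rightInverse r
    rw [Nat.card_congr (Equiv.ofBijective f ⟨hinj, hsurj⟩)]
    exact ih c hc

lemma card_split (a m d : ℕ) (hm : Odd m) (hm0 : 0 < m) (hd : d = 2^a * m) :
    Nat.card {x : ZMod (2*d) // ((x.val : ℤ) ^ 2) ≡ 1 + (d : ℤ) [ZMOD (4 * d)]}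
      = Nat.card {u : ZMod (2^(a+1)) // ((u.val : ℤ))^2 ≡ 1 + (d:ℤ) [ZMOD (2:ℤ)^(a+2)]}
        * Nat.card {v : ZMod m // v ^ 2 = 1} := by
  have hd0 : 0 < d := by rw [hd]; positivity
  haveI : NeZero (2*d) := ⟨by omega⟩
  haveI : NeZero m := ⟨hm0.ne'⟩
  haveI : NeZero (2^(a+1)) := ⟨pow_ne_zero _ two_ne_zero⟩
  have hco : Nat.Coprime (2^(a+1)) m := by
    apply Nat.Coprime.pow_left
    exact Nat.coprime_two_left.mpr hm
  have hco2 : Nat.Coprime (2^(a+2)) m := by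
    apply Nat.Coprime.pow_left
    exact Nat.coprime_two_left.mpr hm
  have h2d : 2*d = 2^(a+1) * m := by rw [hd]; ring
  have h4dZ : (4 : ℤ) * d = 2^(a+2) * m := by
    have : (d:ℤ) = 2^a * m := by exact_mod_cast congrArg (Nat.cast (R := ℤ)) hd
    rw [this]; ring
  have hmd : (m:ℤ) ∣ (d:ℤ) := by
    exact_mod_cast Int.natCast_dvd_natCast.mpr ⟨2^a, by rw [hd]; ring⟩
  -- forward map
  have pf_u : ∀ x : ZMod (2*d), ((x.val : ℤ) ^ 2) ≡ 1 + (d : ℤ) [ZMOD (4 * d)] →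
      ((((x.val : ZMod (2^(a+1)))).val : ℤ))^2 ≡ 1 + (d:ℤ) [ZMOD (2:ℤ)^(a+2)] := by
    intro x hx
    have hv : (((x.val : ZMod (2^(a+1)))).val : ℤ) ≡ (x.val : ℤ) [ZMOD (2:ℤ)^(a+1)] := by
      rw [ZMod.val_natCast]
      have : x.val % 2^(a+1) ≡ x.val [MOD 2^(a+1)] := Nat.mod_modEq _ _
      exact_mod_cast Int.natCast_modEq_iff.mpr this
    have h1 := sq_modEq_lift (by omega) hv
    refine h1.trans (hx.of_dvd ?_)
    rw [h4dZ]
    exact Dvd.intro m rfl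
  have pf_v : ∀ x : ZMod (2*d), ((x.val : ℤ) ^ 2) ≡ 1 + (d : ℤ) [ZMOD (4 * d)] →
      ((x.val : ZMod m)) ^ 2 = 1 := by
    intro x hx
    have hm4 : (m:ℤ) ∣ 4 * d := Dvd.dvd.mul_left hmd 4
    have h1 : ((x.val:ℤ))^2 ≡ 1 + (d:ℤ) [ZMOD (m:ℤ)] := hx.of_dvd hm4
    have h2 : ((x.val:ℤ))^2 ≡ 1 [ZMOD (m:ℤ)] := by
      have : (1 + (d:ℤ)) ≡ 1 + 0 [ZMOD (m:ℤ)] :=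
        Int.ModEq.add_left 1 ((Int.modEq_zero_iff_dvd).mpr hmd)
      simpa using h1.trans this
    have h3 : (((x.val:ℤ))^2 : ℤ) % m = (1:ℤ) % m := h2
    have := (ZMod.intCast_eq_intCast_iff _ _ _).mpr h2
    push_cast at this
    exact this
  let g : {x : ZMod (2*d) // ((x.val : ℤ) ^ 2) ≡ 1 + (d : ℤ) [ZMOD (4 * d)]} →
      {u : ZMod (2^(a+1)) // ((u.val : ℤ))^2 ≡ 1 + (d:ℤ) [ZMOD (2:ℤ)^(a+2)]}
        × {v : ZMod m // v ^ 2 = 1} :=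
    fun x => (⟨(x.1.val : ZMod (2^(a+1))), pf_u x.1 x.2⟩, ⟨(x.1.val : ZMod m), pf_v x.1 x.2⟩)
  have hinj : Function.Injective g := by
    rintro ⟨x₁, h₁⟩ ⟨x₂, h₂⟩ hg
    simp only [g, Prod.mk.injEq, Subtype.mk.injEq] at hg ⊢
    obtain ⟨e1, e2⟩ := hg
    have m1 : x₁.val ≡ x₂.val [MOD 2^(a+1)] := (ZMod.natCast_eq_natCast_iff _ _ _).mp e1
    have m2 : x₁.val ≡ x₂.val [MOD m] := (ZMod.natCast_eq_natCast_iff _ _ _).mp e2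
    have mboth : x₁.val ≡ x₂.val [MOD 2*d] := by
      have := (Nat.modEq_and_modEq_iff_modEq_mul hco).mp ⟨m1, m2⟩
      rwa [← h2d] at this
    have : x₁.val = x₂.val := by
      have lt1 := x₁.val_lt
      have lt2 := x₂.val_lt
      unfold Nat.ModEq at mboth
      rwa [Nat.mod_eq_of_lt lt1, Nat.mod_eq_of_lt lt2] at mboth
    exact ZMod.val_injective _ this
  have hsurj : Function.Surjective g := by
    rintro ⟨⟨u, hu⟩, ⟨v, hv⟩⟩
    obtain ⟨k, hk1, hk2⟩ := Nat.chineseRemainder hco u.val v.val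
    refine ⟨⟨((k : ℕ) : ZMod (2*d)), ?_⟩, ?_⟩
    · -- k is a solution
      have hkv : (((k : ZMod (2*d))).val) ≡ k [MOD 2*d] := by
        rw [ZMod.val_natCast]; exact Nat.mod_modEq _ _
      have hku : (((k : ZMod (2*d))).val) ≡ u.val [MOD 2^(a+1)] :=
        ((hkv.of_dvd (by rw [h2d]; exact Dvd.intro m rfl)).trans hk1)
      have hkm : (((k : ZMod (2*d))).val) ≡ v.val [MOD m] :=
        ((hkv.of_dvd (by rw [h2d]; exact Dvd.intro_left _ rfl)).trans hk2)
      have c1 : ((((k : ZMod (2*d))).val : ℤ))^2 ≡ 1 + (d:ℤ) [ZMOD (2:ℤ)^(a+2)] := by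
        have := sq_modEq_lift (k := a+1) (r := (((k : ZMod (2*d))).val : ℤ)) (s := (u.val : ℤ)) (by omega)
          (by exact_mod_cast Int.natCast_modEq_iff.mpr hku)
        exact this.trans hu
      have c2 : ((((k : ZMod (2*d))).val : ℤ))^2 ≡ 1 + (d:ℤ) [ZMOD ((m:ℕ) : ℤ)] := by
        have hvv : ((v.val:ℤ))^2 ≡ 1 [ZMOD ((m:ℕ):ℤ)] := by
          rw [← ZMod.intCast_eq_intCast_iff] at *
          push_cast
          rw [ZMod.natCast_val, ZMod.cast_id]
          exact hv
        have step : ((((k : ZMod (2*d))).val : ℤ))^2 ≡ ((v.val:ℤ))^2 [ZMOD ((m:ℕ):ℤ)] := by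
          have := Int.natCast_modEq_iff.mpr hkm
          exact this.pow 2
        refine (step.trans hvv).trans ?_
        have : (1:ℤ) ≡ 1 + 0 [ZMOD (m:ℤ)] := by simp
        refine this.trans (Int.ModEq.add_left 1 ((Int.modEq_zero_iff_dvd).mpr hmd).symm)
      have := (Int.modEq_and_modEq_iff_modEq_mul ?_).mp ⟨c1, c2⟩
      · rwa [← h4dZ] at this
      · have e1 : ((2:ℤ)^(a+2)).natAbs = 2^(a+2) := by
          rw [Int.natAbs_pow]; rfl
        rw [e1, Int.natAbs_natCast]
        exact hco2
    · -- g of this equals (u,v)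
      simp only [g, Prod.mk.injEq, Subtype.mk.injEq]
      constructor
      · have hku : (((k : ZMod (2*d))).val) ≡ u.val [MOD 2^(a+1)] := by
          have hkv : (((k : ZMod (2*d))).val) ≡ k [MOD 2*d] := by
            rw [ZMod.val_natCast]; exact Nat.mod_modEq _ _
          exact ((hkv.of_dvd (by rw [h2d]; exact Dvd.intro m rfl)).trans hk1)
        rw [(ZMod.natCast_eq_natCast_iff _ _ _).mpr hku]
        exact ZMod.natCast_rightInverse u
      · have hkm : (((k : ZMod (2*d))).val) ≡ v.val [MOD m] := by
          have hkv : (((k : ZMod (2*d))).val) ≡ k [MOD 2*d] := by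
            rw [ZMod.val_natCast]; exact Nat.mod_modEq _ _
          exact ((hkv.of_dvd (by rw [h2d]; exact Dvd.intro_left _ rfl)).trans hk2)
        rw [(ZMod.natCast_eq_natCast_iff _ _ _).mpr hkm]
        exact ZMod.natCast_rightInverse v
  rw [Nat.card_congr (Equiv.ofBijective g ⟨hinj, hsurj⟩), Nat.card_prod]

lemma card_two_case3 (d : ℕ) (h3 : d % 4 = 3) :
    Nat.card {u : ZMod (2^(0+1)) // ((u.val : ℤ))^2 ≡ 1 + (d:ℤ) [ZMOD (2:ℤ)^(0+2)]} = 1 := by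
  have hdZ : ((d:ℤ)) % 4 = 3 := by omega
  haveI : NeZero (2^(0+1)) := ⟨by norm_num⟩
  have hset : {u : ZMod (2^(0+1)) | ((u.val : ℤ))^2 ≡ 1 + (d:ℤ) [ZMOD (2:ℤ)^(0+2)]} = {0} := by
    ext u
    simp only [Set.mem_setOf_eq, Set.mem_singleton_iff]
    constructor
    · intro hu
      have hdvd : (2:ℤ)^(0+2) ∣ (1 + (d:ℤ)) - (u.val:ℤ)^2 := hu.dvd
      have h4 : (4:ℤ) ∣ (1 + (d:ℤ)) - (u.val:ℤ)^2 := by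
        rwa [show ((2:ℤ)^(0+2)) = 4 by norm_num] at hdvd
      have hv : u.val < 2 := u.val_lt
      have : u.val = 0 ∨ u.val = 1 := by omega
      rcases this with e | e
      · apply ZMod.val_injective; rw [e]; decide
      · exfalso; rw [e] at h4; push_cast at h4; omega
    · rintro rfl
      have hv : (((0 : ZMod (2^(0+1))).val : ℤ)) = 0 := by decide
      rw [hv, Int.modEq_iff_dvd, show ((2:ℤ)^(0+2)) = 4 by norm_num]
      omega
  have hcard : Nat.card {u : ZMod (2^(0+1)) // ((u.val : ℤ))^2 ≡ 1 + (d:ℤ) [ZMOD (2:ℤ)^(0+2)]}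
      = ({0} : Set (ZMod (2^(0+1)))).ncard := by
    rw [← Nat.card_coe_set_eq, ← hset]; rfl
  rw [hcard, Set.ncard_singleton]

/-- If `d ≡ 3 (mod 4)` or `8 ∣ d`, the number of residue classes `x ∈ ℤ/2dℤ`
with `x² ≡ 1 + d (mod 4d)` is `2^{ω(d)}`. -/
theorem card_classes_mod_two_d_sq_congr_one_add_d (d : ℕ) (hd : 0 < d)
    (h : d % 4 = 3 ∨ 8 ∣ d) :
    Nat.card {x : ZMod (2 * d) // ((x.val : ℤ) ^ 2) ≡ 1 + (d : ℤ) [ZMOD (4 * d)]} =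
      2 ^ d.primeFactors.card := by
  rcases h with h3 | h8
  · -- d ≡ 3 (mod 4): d is odd, a = 0, m = d
    have hodd : Odd d := Nat.odd_iff.mpr (by omega)
    rw [card_split 0 d d hodd hd (by norm_num), card_two_case3 d h3,
      card_sq_eq_one_odd d hodd, one_mul]
  · -- 8 ∣ d
    set a := d.factorization 2 with ha
    set m := d / 2^a with hm
    have hdm : 2^a * m = d := Nat.ordProj_mul_ordCompl_eq_self d 2
    have hm0 : 0 < m := Nat.ordCompl_pos 2 hd.ne'
    have hmodd : Odd m := by
      have h2 : ¬ 2 ∣ m := Nat.not_dvd_ordCompl Nat.prime_two hd.ne'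
      rw [Nat.odd_iff]
      omega
    have ha3 : 3 ≤ a := by
      rw [ha]
      have : (2:ℕ)^3 ∣ d := by norm_num; exact h8
      exact (Nat.Prime.pow_dvd_iff_le_factorization Nat.prime_two hd.ne').mp this
    have hc : (1 + (d:ℤ)) ≡ 1 [ZMOD 8] := by
      rw [Int.modEq_iff_dvd]
      have : (8:ℤ) ∣ (d:ℤ) := Int.natCast_dvd_natCast.mpr h8
      omega
    have hωd : d.primeFactors.card = m.primeFactors.card + 1 := by
      conv_lhs => rw [← hdm]
      rw [Nat.primeFactors_mul (pow_ne_zero _ two_ne_zero) hm0.ne',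
        Nat.primeFactors_prime_pow (by omega) Nat.prime_two]
      rw [Finset.card_union_of_disjoint, Finset.card_singleton, add_comm]
      rw [Finset.disjoint_singleton_left]
      intro hmem
      have := Nat.dvd_of_mem_primeFactors hmem
      rw [Nat.odd_iff] at hmodd
      omega
    rw [card_split a m d hmodd hm0 hdm.symm,
      card_two_pow_sol (a+1) (by omega) (1 + (d:ℤ)) hc,
      card_sq_eq_one_odd m hmodd, hωd, pow_succ]
    ring
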